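/- Let K be a field of characteristic 0, A a finite-dimensional semisimple K-algebra with simple factors A₁,...,A_r and corresponding central idempotents e₁,...,e_r, and t : A → K a K-linear trace functional (t(fg)=t(gf)) with associated central element μ = Σ μᵢeᵢ (i.e., t(f) = Trd_A(μf)) where each μᵢ ∈ ℤ ⊆ Z(Aᵢ). Then for any f ∈ A, exp(Σ_{n≥1} t(fⁿ) tⁿ/n) = ∏ᵢ Nrd_{Aᵢ}(eᵢ − eᵢ f t)^{−μᵢ}, which lies in K(t). -/

import Mathlib

/-- The exponential `exp f = ∑ fᵏ/k!` of a power series `f` (with zero constant term),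
over a field of characteristic 0. -/
noncomputable def psExp {K : Type*} [Field K] (f : PowerSeries K) : PowerSeries K :=
  PowerSeries.mk fun n =>
    ∑ k ∈ Finset.range (n + 1), PowerSeries.coeff n (f ^ k) / (Nat.factorial k : K)

namespace Stmt14

open PowerSeries

variable {F : Type*} [Field F]

lemma coeff_psExp (S : PowerSeries F) (n : ℕ) :
    coeff n (psExp S) =
      ∑ k ∈ Finset.range (n + 1), coeff n (S ^ k) / (Nat.factorial k : F) := by
  simp [psExp]

lemma constCoeff_psExp (S : PowerSeries F) : constantCoeff (psExp S) = 1 := by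
  rw [← coeff_zero_eq_constantCoeff, coeff_psExp]
  simp

lemma coeff_pow_eq_zero {S : PowerSeries F} (hS : constantCoeff S = 0)
    {n k : ℕ} (h : n < k) : coeff n (S ^ k) = 0 := by
  have hdvd : (X : PowerSeries F) ^ k ∣ S ^ k := pow_dvd_pow_of_dvd (X_dvd_iff.mpr hS) k
  exact X_pow_dvd_iff.mp hdvd n h

variable [CharZero F]

lemma derivative_psExp (S : PowerSeries F) (hS : constantCoeff S = 0) :
    d⁄dX F (psExp S) = d⁄dX F S * psExp S := by
  ext n
  have key : ∀ k : ℕ, coeff n (d⁄dX F S * S ^ k) =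
      coeff (n + 1) (S ^ (k + 1)) * (n + 1) / (k + 1 : F) := by
    intro k
    have h := Derivation.leibniz_pow (d⁄dX F) (a := S) (k + 1)
    simp only [Nat.add_sub_cancel, smul_eq_mul] at h
    have h2 := congrArg (coeff n) h
    rw [coeff_derivative, map_nsmul, nsmul_eq_mul] at h2
    rw [mul_comm (d⁄dX F S) (S ^ k)]
    have hk : ((k : F) + 1) ≠ 0 := Nat.cast_add_one_ne_zero k
    rw [eq_div_iff hk, h2]
    push_cast
    ring
  rw [coeff_derivative, coeff_psExp, coeff_mul]
  have step1 : ∀ p ∈ Finset.HasAntidiagonal.antidiagonal n,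
      coeff p.1 (d⁄dX F S) * coeff p.2 (psExp S) =
      ∑ k ∈ Finset.range (n + 1),
        coeff p.1 (d⁄dX F S) * (coeff p.2 (S ^ k) / (Nat.factorial k : F)) := by
    intro p hp
    rw [coeff_psExp, Finset.mul_sum]
    refine Finset.sum_subset
      (Finset.range_subset_range.mpr (Nat.succ_le_succ (Finset.HasAntidiagonal.antidiagonal.snd_le hp))) ?_
    intro k _ hk
    have hlt : p.2 < k := by simpa [Nat.lt_succ_iff] using hk
    rw [coeff_pow_eq_zero hS hlt]
    simp
  rw [Finset.sum_congr rfl step1, Finset.sum_comm]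
  have step2 : ∀ k ∈ Finset.range (n + 1),
      (∑ p ∈ Finset.HasAntidiagonal.antidiagonal n,
        coeff p.1 (d⁄dX F S) * (coeff p.2 (S ^ k) / (Nat.factorial k : F))) =
      coeff (n + 1) (S ^ (k + 1)) * (n + 1) / ((k + 1 : F) * (Nat.factorial k : F)) := by
    intro k _
    have : (∑ p ∈ Finset.HasAntidiagonal.antidiagonal n,
        coeff p.1 (d⁄dX F S) * (coeff p.2 (S ^ k) / (Nat.factorial k : F))) =
        (∑ p ∈ Finset.HasAntidiagonal.antidiagonal n,
          coeff p.1 (d⁄dX F S) * coeff p.2 (S ^ k)) / (Nat.factorial k : F) := by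
      rw [Finset.sum_div]
      exact Finset.sum_congr rfl fun p _ => (mul_div_assoc _ _ _).symm
    rw [this, ← coeff_mul, key k, div_div]
  rw [Finset.sum_congr rfl step2]
  rw [Finset.sum_range_succ' (fun k => coeff (n + 1) (S ^ k) / (Nat.factorial k : F)) (n + 1)]
  have h0 : coeff (n + 1) (S ^ 0) / (Nat.factorial 0 : F) = 0 := by
    simp [PowerSeries.coeff_one]
  rw [h0, add_zero, Finset.sum_mul]
  refine Finset.sum_congr rfl fun k _ => ?_
  rw [Nat.factorial_succ]
  push_cast
  have hk : ((k : F) + 1) ≠ 0 := Nat.cast_add_one_ne_zero k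
  have hf : ((Nat.factorial k : F)) ≠ 0 := Nat.cast_ne_zero.mpr (Nat.factorial_ne_zero k)
  field_simp

lemma psExp_mul_psExp_neg (S : PowerSeries F) (hS : constantCoeff S = 0) :
    psExp S * psExp (-S) = 1 := by
  have hS' : constantCoeff (-S) = 0 := by rw [map_neg, hS, neg_zero]
  refine PowerSeries.derivative.ext ?_ ?_
  · rw [Derivation.leibniz, derivative_psExp _ hS, derivative_psExp _ hS', map_neg,
      Derivation.map_one_eq_zero]
    simp only [smul_eq_mul]
    ring
  · rw [map_mul, constCoeff_psExp, constCoeff_psExp, map_one, one_mul]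

lemma psExp_add (S T : PowerSeries F) (hS : constantCoeff S = 0)
    (hT : constantCoeff T = 0) : psExp (S + T) = psExp S * psExp T := by
  have hST : constantCoeff (S + T) = 0 := by rw [map_add, hS, hT, add_zero]
  have key : psExp (S + T) * psExp (-S) * psExp (-T) = 1 := by
    have hS' : constantCoeff (-S) = 0 := by rw [map_neg, hS, neg_zero]
    have hT' : constantCoeff (-T) = 0 := by rw [map_neg, hT, neg_zero]
    refine PowerSeries.derivative.ext ?_ ?_
    · rw [Derivation.leibniz, Derivation.leibniz, derivative_psExp _ hS',
        derivative_psExp _ hT', derivative_psExp _ hST, map_neg, map_neg, map_add,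
        Derivation.map_one_eq_zero]
      simp only [smul_eq_mul]
      ring
    · rw [map_mul, map_mul, constCoeff_psExp, constCoeff_psExp, constCoeff_psExp, map_one]
      ring
  calc psExp (S + T) = psExp (S + T) * (psExp (-S) * psExp S) * (psExp (-T) * psExp T) := by
        rw [mul_comm (psExp (-S)), mul_comm (psExp (-T)), psExp_mul_psExp_neg _ hS,
          psExp_mul_psExp_neg _ hT, mul_one, mul_one]
    _ = psExp (S + T) * psExp (-S) * psExp (-T) * (psExp S * psExp T) := by ring
    _ = psExp S * psExp T := by rw [key, one_mul]

lemma psExp_zero : psExp (0 : PowerSeries F) = 1 := by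
  ext n
  rw [coeff_psExp]
  rcases Nat.eq_zero_or_pos n with h | h
  · subst h; simp
  · rw [Finset.sum_eq_zero, PowerSeries.coeff_one, if_neg h.ne']
    intro k hk
    rcases Nat.eq_zero_or_pos k with h2 | h2
    · subst h2; simp [PowerSeries.coeff_one, h.ne']
    · rw [zero_pow h2.ne', map_zero, zero_div]

lemma psExp_nsmul (m : ℕ) (S : PowerSeries F) (hS : constantCoeff S = 0) :
    psExp (m • S) = psExp S ^ m := by
  induction m with
  | zero => simpa using psExp_zero
  | succ m ih =>
    rw [succ_nsmul, psExp_add _ _ (by simp [hS]) hS, ih, pow_succ]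

section Det

variable {R S : Type*} [CommRing R] [CommRing S] [Algebra R S]
variable {ι : Type*} [Fintype ι] [DecidableEq ι]

lemma derivation_prod (D : Derivation R S S) (s : Finset ι) (f : ι → S) :
    D (∏ i ∈ s, f i) = ∑ i ∈ s, (∏ j ∈ s.erase i, f j) * D (f i) := by
  induction s using Finset.induction with
  | empty => simp
  | @insert a s ha ih =>
    rw [Finset.prod_insert ha, Derivation.leibniz, smul_eq_mul, smul_eq_mul, ih,
      Finset.sum_insert ha, Finset.erase_insert ha, Finset.mul_sum]
    rw [add_comm]
    congr 1
    refine Finset.sum_congr rfl fun i hi => ?_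
    have hia : i ≠ a := fun h => ha (h ▸ hi)
    rw [Finset.erase_insert_of_ne hia.symm,
      Finset.prod_insert (fun h => ha (Finset.mem_of_mem_erase h))]
    ring

lemma derivation_det (D : Derivation R S S) (B : Matrix ι ι S) :
    D B.det = ∑ j, (B.updateCol j fun i => D (B i j)).det := by
  have expand : ∀ j, (B.updateCol j fun i => D (B i j)).det =
      ∑ σ : Equiv.Perm ι, Equiv.Perm.sign σ •
        (D (B (σ j) j) * ∏ i ∈ Finset.univ.erase j, B (σ i) i) := by
    intro j
    rw [Matrix.det_apply]
    refine Finset.sum_congr rfl fun σ _ => ?_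
    congr 1
    rw [← Finset.mul_prod_erase Finset.univ _ (Finset.mem_univ j)]
    rw [Matrix.updateCol_self]
    congr 1
    refine Finset.prod_congr rfl fun i hi => ?_
    rw [Matrix.updateCol_ne (Finset.ne_of_mem_erase hi)]
  simp only [expand]
  rw [Matrix.det_apply, map_sum, Finset.sum_comm]
  refine Finset.sum_congr rfl fun σ _ => ?_
  have : D (Equiv.Perm.sign σ • ∏ i, B (σ i) i) =
      Equiv.Perm.sign σ • D (∏ i, B (σ i) i) := by
    rcases Int.units_eq_one_or (Equiv.Perm.sign σ) with h | h <;> simp [h]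
  rw [this, derivation_prod, Finset.smul_sum]
  refine Finset.sum_congr rfl fun j _ => ?_
  rw [mul_comm]

end Det

section MAT

variable {ι : Type*} [Fintype ι] [DecidableEq ι]

lemma MAT (M : Matrix ι ι F) :
    psExp (PowerSeries.mk fun k => if k = 0 then 0 else Matrix.trace (M ^ k) / (k : F))
      * ((Matrix.charpoly M).reverse : PowerSeries F) = 1 := by
  set L : PowerSeries F :=
    PowerSeries.mk fun k => if k = 0 then 0 else Matrix.trace (M ^ k) / (k : F) with hL
  have hL0 : constantCoeff L = 0 := by
    rw [hL, ← coeff_zero_eq_constantCoeff, coeff_mk, if_pos rfl]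
  set Mps : Matrix ι ι (PowerSeries F) := M.map C with hMps
  set B : Matrix ι ι (PowerSeries F) := 1 - (X : PowerSeries F) • Mps with hB
  set G : Matrix ι ι (PowerSeries F) :=
    Matrix.of fun i j => PowerSeries.mk fun k => (M ^ k) i j with hG
  have hMG : ∀ i j : ι, (Mps * G) i j = PowerSeries.mk fun k => (M ^ (k + 1)) i j := by
    intro i j
    ext k
    rw [Matrix.mul_apply, map_sum, coeff_mk]
    have : ∀ l, coeff k (Mps i l * G l j) = M i l * (M ^ k) l j := by
      intro l
      rw [hMps, hG, Matrix.map_apply, Matrix.of_apply, coeff_C_mul, coeff_mk]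
    rw [Finset.sum_congr rfl fun l _ => this l, pow_succ', Matrix.mul_apply]
  have hBG : B * G = 1 := by
    rw [hB, Matrix.sub_mul, Matrix.one_mul, Matrix.smul_mul]
    refine Matrix.ext fun i j => ?_
    rw [Matrix.sub_apply, Matrix.smul_apply, hMG i j, smul_eq_mul, Matrix.one_apply]
    ext k
    cases k with
    | zero =>
      rw [map_sub, hG]
      simp only [Matrix.of_apply, coeff_mk, pow_zero, Matrix.one_apply, apply_ite (coeff 0)]
      simp
    | succ k =>
      rw [map_sub, coeff_succ_X_mul, hG, Matrix.of_apply, coeff_mk, coeff_mk, sub_self]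
      split_ifs with h
      · rw [PowerSeries.coeff_one, if_neg (Nat.succ_ne_zero k)]
      · rw [map_zero]
  have hGB : G * B = 1 := mul_eq_one_comm.mp hBG
  have hadj : Matrix.adjugate B = B.det • G := by
    calc Matrix.adjugate B = Matrix.adjugate B * (B * G) := by rw [hBG, Matrix.mul_one]
      _ = Matrix.adjugate B * B * G := by rw [Matrix.mul_assoc]
      _ = (B.det • (1 : Matrix ι ι (PowerSeries F))) * G := by rw [Matrix.adjugate_mul]
      _ = B.det • G := by rw [Matrix.smul_mul, Matrix.one_mul]
  have hPdet : B.det = ((Matrix.charpoly M).reverse : PowerSeries F) := by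
    have hmap : (1 - (Polynomial.X : Polynomial F) • M.map Polynomial.C).map
        (Polynomial.coeToPowerSeries.ringHom (R := F)) = B := by
      ext i j
      simp only [Matrix.map_apply, Matrix.sub_apply, Matrix.smul_apply, Matrix.one_apply,
        smul_eq_mul, map_sub, map_mul, apply_ite, map_one, map_zero, hB, hMps,
        Polynomial.coeToPowerSeries.ringHom_apply, Polynomial.coe_X, Polynomial.coe_C]
    rw [Matrix.reverse_charpoly, Matrix.charpolyRev,
      ← Polynomial.coeToPowerSeries.ringHom_apply, RingHom.map_det,
      RingHom.mapMatrix_apply, hmap]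
  set T : PowerSeries F := Matrix.trace (G * Mps) with hT
  have hcoeffT : ∀ k, coeff k T = Matrix.trace (M ^ (k + 1)) := by
    intro k
    rw [hT, Matrix.trace, map_sum]
    have : ∀ j, coeff k ((G * Mps).diag j) = (M ^ (k + 1)).diag j := by
      intro j
      rw [Matrix.diag_apply, Matrix.mul_apply, map_sum]
      have h2 : ∀ l, coeff k (G j l * Mps l j) = (M ^ k) j l * M l j := by
        intro l
        rw [hMps, hG, Matrix.map_apply, Matrix.of_apply, coeff_mul_C, coeff_mk]
      rw [Finset.sum_congr rfl fun l _ => h2 l, Matrix.diag_apply, pow_succ, Matrix.mul_apply]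
    rw [Finset.sum_congr rfl fun j _ => this j, Matrix.trace]
  have hdL : d⁄dX F L = T := by
    ext k
    rw [coeff_derivative, hL, coeff_mk, if_neg (Nat.succ_ne_zero k), hcoeffT k]
    have hk : ((k : F) + 1) ≠ 0 := Nat.cast_add_one_ne_zero k
    push_cast
    rw [div_mul_cancel₀ _ hk]
  have hdP : d⁄dX F B.det = -(B.det * T) := by
    rw [derivation_det]
    have hcol : ∀ j, (fun i => d⁄dX F (B i j)) = fun i => -(Mps i j) := by
      intro j
      funext i
      rw [hB]
      simp only [Matrix.sub_apply, Matrix.smul_apply, Matrix.one_apply, smul_eq_mul, map_sub]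
      have h1 : d⁄dX F ((if i = j then 1 else 0 : PowerSeries F)) = 0 := by
        split_ifs
        · exact Derivation.map_one_eq_zero _
        · exact map_zero _
      have h2 : d⁄dX F (Mps i j) = 0 := by
        rw [hMps, Matrix.map_apply]
        exact derivative_C
      rw [h1, Derivation.leibniz, derivative_X, h2]
      simp
    simp only [hcol]
    have hneg : ∀ j : ι, (fun i => -(Mps i j)) = (-1 : PowerSeries F) • (fun i => Mps i j) := by
      intro j; funext i; simp
    simp only [hneg, Matrix.det_updateCol_smul]
    have hcr : ∀ j, (B.updateCol j fun i => Mps i j).det =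
        B.det * Matrix.mulVec G (fun i => Mps i j) j := by
      intro j
      rw [← Matrix.cramer_apply, Matrix.cramer_eq_adjugate_mulVec, hadj,
        Matrix.smul_mulVec, Pi.smul_apply, smul_eq_mul]
    simp only [hcr]
    have hTsum : T = ∑ j, Matrix.mulVec G (fun i => Mps i j) j := by
      rw [hT, Matrix.trace]
      refine Finset.sum_congr rfl fun j _ => ?_
      rw [Matrix.diag_apply, Matrix.mul_apply, Matrix.mulVec, dotProduct]
    rw [hTsum, Finset.mul_sum, ← Finset.sum_neg_distrib]
    exact Finset.sum_congr rfl fun j _ => by ring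
  have hdE : d⁄dX F (psExp L) = T * psExp L := by
    rw [derivative_psExp _ hL0, hdL]
  rw [← hPdet]
  refine PowerSeries.derivative.ext ?_ ?_
  · rw [Derivation.leibniz, hdE, hdP, Derivation.map_one_eq_zero]
    simp only [smul_eq_mul]
    ring
  · rw [map_mul, constCoeff_psExp, one_mul, map_one, hPdet,
      ← coeff_zero_eq_constantCoeff, Polynomial.coeff_coe, Polynomial.coeff_zero_reverse,
      (Matrix.charpoly_monic M).leadingCoeff]

end MAT

lemma psExp_map {K L : Type*} [Field K] [Field L] (φ : K →+* L) (S : PowerSeries K) :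
    PowerSeries.map φ (psExp S) = psExp (PowerSeries.map φ S) := by
  ext m
  rw [PowerSeries.coeff_map, coeff_psExp, coeff_psExp, map_sum]
  refine Finset.sum_congr rfl fun k _ => ?_
  rw [map_div₀, map_natCast, ← map_pow, PowerSeries.coeff_map]

lemma psExp_sum {α : Type*} [DecidableEq α] (s : Finset α) (g : α → PowerSeries F)
    (h : ∀ i ∈ s, constantCoeff (g i) = 0) :
    psExp (∑ i ∈ s, g i) = ∏ i ∈ s, psExp (g i) := by
  induction s using Finset.induction with
  | empty => simpa using psExp_zero
  | @insert a s ha ih =>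
    have hs : constantCoeff (∑ i ∈ s, g i) = 0 := by
      rw [map_sum]
      exact Finset.sum_eq_zero fun i hi => h i (Finset.mem_insert_of_mem hi)
    rw [Finset.sum_insert ha, Finset.prod_insert ha,
      psExp_add _ _ (h a (Finset.mem_insert_self a s)) hs,
      ih fun i hi => h i (Finset.mem_insert_of_mem hi)]

lemma psExp_natCast_smul (c : ℕ) (S : PowerSeries F) (hS : constantCoeff S = 0) :
    psExp ((c : F) • S) = psExp S ^ c := by
  rw [Nat.cast_smul_eq_nsmul, psExp_nsmul _ _ hS]

end Stmt14


/-- (Theorem 3 a) of the paper).  Let `K` be a field of characteristic 0,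
`A` a finite-dimensional semisimple `K`-algebra with simple factors cut out by central
orthogonal idempotents `e₁, …, e_r` summing to 1, and `t : A → K` a `K`-linear tracial
functional whose multiplicity on the `i`-th factor is a rational integer `μᵢ`: concretely,
the reduced trace of each factor `Aᵢ = eᵢAeᵢ` is realized by a corner representation
`ρᵢ : A → M_{nᵢ}(Ω)` (with `ρᵢ(eᵢ) = 1`, `ρᵢ x = ρᵢ(eᵢ x eᵢ)`, `ρᵢ` multiplicative),
and `t f = ∑ᵢ μᵢ · Trd_{Aᵢ}(eᵢ f) = ∑ᵢ μᵢ · tr (ρᵢ f)`.  Then for any `f ∈ A`,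
`exp (∑_{n≥1} t(fⁿ) tⁿ/n) = ∏ᵢ Nrd_{Aᵢ}(eᵢ − eᵢ f t)^{−μᵢ}`, where
`Nrd_{Aᵢ}(eᵢ − eᵢ f t)` is the reverse characteristic polynomial of `ρᵢ f`, i.e. the
identity `Z · ∏ᵢ Pᵢ^{μᵢ⁺} = ∏ᵢ Pᵢ^{μᵢ⁻}` holds (so `Z` lies in `K(t)`). -/
theorem stmt_14 (K Ω : Type*) [Field K] [CharZero K] [Field Ω] [Algebra K Ω]
    (A : Type*) [Ring A] [Algebra K A] [FiniteDimensional K A] [IsSemisimpleRing A]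
    (r : ℕ) (e : Fin r → A)
    (hcentral : ∀ i, e i ∈ Set.center A)
    (hidem : ∀ i, IsIdempotentElem (e i))
    (horth : ∀ i j, i ≠ j → e i * e j = 0)
    (hsum : ∑ i, e i = 1)
    (n : Fin r → ℕ) (ρ : ∀ i, A →ₗ[K] Matrix (Fin (n i)) (Fin (n i)) Ω)
    (hρmul : ∀ i (x y : A), ρ i (x * y) = ρ i x * ρ i y)
    (hρe : ∀ i, ρ i (e i) = 1)
    (hρcorner : ∀ i (x : A), ρ i x = ρ i (e i * x * e i))
    (μ : Fin r → ℤ)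
    (t : A →ₗ[K] K) (htracial : ∀ f g : A, t (f * g) = t (g * f))
    (hμ : ∀ f : A, algebraMap K Ω (t f) = ∑ i, (μ i : Ω) * Matrix.trace (ρ i f))
    (f : A) :
    PowerSeries.map (algebraMap K Ω)
        (psExp (PowerSeries.mk fun k => if k = 0 then 0 else t (f ^ k) / (k : K)))
      * ∏ i, (↑(Matrix.charpoly (ρ i f)).reverse : PowerSeries Ω) ^ (μ i).toNat
    = ∏ i, (↑(Matrix.charpoly (ρ i f)).reverse : PowerSeries Ω) ^ (-(μ i)).toNat := by
  haveI : CharZero Ω := charZero_of_injective_algebraMap (algebraMap K Ω).injective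
  open PowerSeries Stmt14 in
  set φ := algebraMap K Ω with hφ
  set Lm : Fin r → PowerSeries Ω := fun i =>
    PowerSeries.mk fun k => if k = 0 then 0 else Matrix.trace ((ρ i f) ^ k) / (k : Ω) with hLm
  have hLm0 : ∀ i, constantCoeff (Lm i) = 0 := fun i => by
    rw [hLm, ← coeff_zero_eq_constantCoeff, coeff_mk, if_pos rfl]
  have hpow : ∀ i (k : ℕ), ρ i (f ^ (k + 1)) = (ρ i f) ^ (k + 1) := by
    intro i k
    induction k with
    | zero => simp
    | succ k ih => rw [pow_succ f, hρmul, ih, ← pow_succ]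
  have hmapS : PowerSeries.map φ
      (PowerSeries.mk fun k => if k = 0 then 0 else t (f ^ k) / (k : K))
      = ∑ i, (μ i : Ω) • Lm i := by
    ext k
    rw [PowerSeries.coeff_map, coeff_mk, map_sum]
    have hR : ∀ i, coeff k ((μ i : Ω) • Lm i) =
        (μ i : Ω) * (if k = 0 then 0 else Matrix.trace ((ρ i f) ^ k) / (k : Ω)) := by
      intro i
      rw [map_smul, smul_eq_mul, hLm, coeff_mk]
    rw [Finset.sum_congr rfl fun i _ => hR i]
    cases k with
    | zero => simp
    | succ k =>
      rw [if_neg (Nat.succ_ne_zero k), map_div₀, map_natCast, hμ (f ^ (k + 1))]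
      rw [Finset.sum_div]
      refine Finset.sum_congr rfl fun i _ => ?_
      rw [if_neg (Nat.succ_ne_zero k), hpow i k, mul_div_assoc]
  rw [psExp_map φ, hmapS]
  set E : Fin r → PowerSeries Ω := fun i => psExp (Lm i) with hE
  set P : Fin r → PowerSeries Ω := fun i =>
    ((Matrix.charpoly (ρ i f)).reverse : PowerSeries Ω) with hP
  have hEP : ∀ i, E i * P i = 1 := fun i => MAT (ρ i f)
  set a : Fin r → ℕ := fun i => (μ i).toNat with ha
  set b : Fin r → ℕ := fun i => (-μ i).toNat with hb
  have hconst : ∀ (c : Ω) i, constantCoeff (c • Lm i) = 0 := fun c i => by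
    rw [PowerSeries.smul_eq_C_mul, map_mul, PowerSeries.constantCoeff_C, hLm0 i, mul_zero]
  have hconstsum : ∀ (g : Fin r → Ω),
      constantCoeff (∑ i, g i • Lm i) = 0 := fun g => by
    rw [map_sum]; exact Finset.sum_eq_zero fun i _ => hconst _ i
  have hsplit : (∑ i, (μ i : Ω) • Lm i) + ∑ i, (b i : Ω) • Lm i
      = ∑ i, (a i : Ω) • Lm i := by
    rw [← Finset.sum_add_distrib]
    refine Finset.sum_congr rfl fun i _ => ?_
    rw [← add_smul]
    congr 1
    have : (a i : ℤ) - (b i : ℤ) = μ i := Int.toNat_sub_toNat_neg (μ i)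
    have h2 : ((a i : ℤ) : Ω) - ((b i : ℤ) : Ω) = ((μ i : ℤ) : Ω) := by
      rw [← Int.cast_sub, this]
    push_cast at h2 ⊢
    linear_combination -h2
  have hprodE : ∀ (c : Fin r → ℕ),
      psExp (∑ i, ((c i : Ω)) • Lm i) = ∏ i, E i ^ c i := by
    intro c
    rw [psExp_sum _ _ fun i _ => hconst _ i]
    exact Finset.prod_congr rfl fun i _ => psExp_natCast_smul _ _ (hLm0 i)
  have hU : constantCoeff (∏ i, E i ^ b i) = 1 := by
    rw [map_prod]
    refine Finset.prod_eq_one fun i _ => ?_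
    rw [map_pow, hE, constCoeff_psExp, one_pow]
  have hU0 : (∏ i, E i ^ b i) ≠ 0 := fun h => by
    rw [h, map_zero] at hU; exact zero_ne_one hU
  apply mul_right_cancel₀ hU0
  have key : ∀ (c : Fin r → ℕ), (∏ i, E i ^ c i) * ∏ i, P i ^ c i = 1 := by
    intro c
    rw [← Finset.prod_mul_distrib]
    refine Finset.prod_eq_one fun i _ => ?_
    rw [← mul_pow, hEP i, one_pow]
  calc psExp (∑ i, (μ i : Ω) • Lm i) * (∏ i, P i ^ a i) * ∏ i, E i ^ b i
      = psExp (∑ i, (μ i : Ω) • Lm i) * psExp (∑ i, ((b i : Ω)) • Lm i)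
          * ∏ i, P i ^ a i := by rw [hprodE b]; ring
    _ = psExp ((∑ i, (μ i : Ω) • Lm i) + ∑ i, ((b i : Ω)) • Lm i) * ∏ i, P i ^ a i := by
          rw [psExp_add _ _ (hconstsum _) (hconstsum _)]
    _ = psExp (∑ i, ((a i : Ω)) • Lm i) * ∏ i, P i ^ a i := by rw [hsplit]
    _ = (∏ i, E i ^ a i) * ∏ i, P i ^ a i := by rw [hprodE a]
    _ = 1 := key a
    _ = (∏ i, P i ^ b i) * ∏ i, E i ^ b i := by
          rw [mul_comm (∏ i, P i ^ b i)]
          exact (key b).symm
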